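/- Let {𝒜_k}_{k≥1} be a sequence of labyrinth patterns with widths m_k ≥ 3 and L_∞ the resulting mixed labyrinth fractal. For x ∈ [0,1], both (x,1) ∈ L_∞ and (x,0) ∈ L_∞ hold if and only if (x,1) is the top exit of L_∞ and (x,0) is the bottom exit of L_∞; analogously, for y ∈ [0,1], both (0,y) ∈ L_∞ and (1,y) ∈ L_∞ hold if and only if (0,y) is the left exit and (1,y) is the right exit of L_∞. -/

import Mathlib

open Set

namespace Labyrinth

/-- The closed square `S_{i,j,m} = [i/m,(i+1)/m] × [j/m,(j+1)/m]` of the `m × m` grid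
on the unit square, indexed by `p = (i,j)`. -/
def cell (m : ℕ) (p : ℕ × ℕ) : Set (ℝ × ℝ) :=
  Icc ((p.1 : ℝ) / (m : ℝ)) (((p.1 : ℝ) + 1) / (m : ℝ)) ×ˢ
    Icc ((p.2 : ℝ) / (m : ℝ)) (((p.2 : ℝ) + 1) / (m : ℝ))

/-- An `m`-pattern: a nonempty set of grid indices within the `m × m` grid. -/
def IsPattern (m : ℕ) (A : Set (ℕ × ℕ)) : Prop :=
  A.Nonempty ∧ ∀ p ∈ A, p.1 < m ∧ p.2 < m

/-- Two grid squares share a side. -/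
def SideAdj (p q : ℕ × ℕ) : Prop :=
  (p.1 = q.1 ∧ (p.2 + 1 = q.2 ∨ q.2 + 1 = p.2)) ∨
  (p.2 = q.2 ∧ (p.1 + 1 = q.1 ∨ q.1 + 1 = p.1))

/-- Two grid squares share a side or a corner. -/
def CornerAdj (p q : ℕ × ℕ) : Prop :=
  SideAdj p q ∨
  ((p.1 + 1 = q.1 ∨ q.1 + 1 = p.1) ∧ (p.2 + 1 = q.2 ∨ q.2 + 1 = p.2))

/-- The graph `𝒢(𝒜)` of a pattern: vertices are its squares, two squares being
adjacent iff they share a side. -/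
def patternGraph (A : Set (ℕ × ℕ)) : SimpleGraph ↥A where
  Adj p q := SideAdj p.1 q.1
  symm := by
    constructor
    rintro ⟨p, hp⟩ ⟨q, hq⟩ h
    rcases h with ⟨h1, h2⟩ | ⟨h1, h2⟩
    · exact Or.inl ⟨h1.symm, h2.symm⟩
    · exact Or.inr ⟨h1.symm, h2.symm⟩
  loopless := by
    constructor
    rintro ⟨p, hp⟩ h
    rcases h with ⟨h1, h2 | h2⟩ | ⟨h1, h2 | h2⟩ <;> omega

/-- The four sides of a square/pattern. -/
inductive Side | top | bottom | left | right
deriving DecidableEq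

/-- `p` is an exit square of the `m`-pattern `A` on the given side. -/
def IsExitSq (m : ℕ) (A : Set (ℕ × ℕ)) : Side → ℕ × ℕ → Prop
  | .top, p => p ∈ A ∧ p.2 = m - 1 ∧ (p.1, 0) ∈ A
  | .bottom, p => p ∈ A ∧ p.2 = 0 ∧ (p.1, m - 1) ∈ A
  | .left, p => p ∈ A ∧ p.1 = 0 ∧ (m - 1, p.2) ∈ A
  | .right, p => p ∈ A ∧ p.1 = m - 1 ∧ (0, p.2) ∈ A

/-- An `m × m`-labyrinth pattern: a nonempty `m`-pattern, `m ≥ 3`, whose graph is a tree,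
with exactly one vertical and exactly one horizontal exit pair, and no two white squares
at diagonally opposite corners. -/
def IsLabyrinthPattern (m : ℕ) (A : Set (ℕ × ℕ)) : Prop :=
  3 ≤ m ∧ IsPattern m A ∧ (patternGraph A).IsTree ∧
    (∃! i : ℕ, (i, m - 1) ∈ A ∧ (i, 0) ∈ A) ∧
    (∃! j : ℕ, (0, j) ∈ A ∧ (m - 1, j) ∈ A) ∧
    ((0, 0) ∈ A → (m - 1, m - 1) ∉ A) ∧
    ((m - 1, 0) ∈ A → (0, m - 1) ∉ A)

/-- A wild labyrinth pattern: the graph is merely connected, and there is at least one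
vertical and at least one horizontal exit pair. -/
def IsWildLabyrinthPattern (m : ℕ) (A : Set (ℕ × ℕ)) : Prop :=
  3 ≤ m ∧ IsPattern m A ∧ (patternGraph A).Connected ∧
    (∃ i : ℕ, (i, m - 1) ∈ A ∧ (i, 0) ∈ A) ∧
    (∃ j : ℕ, (0, j) ∈ A ∧ (m - 1, j) ∈ A) ∧
    ((0, 0) ∈ A → (m - 1, m - 1) ∉ A) ∧
    ((m - 1, 0) ∈ A → (0, m - 1) ∉ A)

/-- One substitution step: place a copy of the pattern `A'` (of width `m'`) into each
white square of `W`. -/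
def subst (m' : ℕ) (A' W : Set (ℕ × ℕ)) : Set (ℕ × ℕ) :=
  {q | ∃ p ∈ W, ∃ r ∈ A', q = (p.1 * m' + r.1, p.2 * m' + r.2)}

/-- The white squares `𝒲_n` of level `n`; `whites m A n` is the paper's `𝒲_n`, where
`A k` is the paper's pattern `𝒜_{k+1}` of width `m k = m_{k+1}`; level `0` is the whole
unit square. -/
def whites (m : ℕ → ℕ) (A : ℕ → Set (ℕ × ℕ)) : ℕ → Set (ℕ × ℕ)
  | 0 => {(0, 0)}
  | n + 1 => subst (m n) (A n) (whites m A n)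

/-- `m(n) = m_1 ⋯ m_n`. -/
def mProd (m : ℕ → ℕ) (n : ℕ) : ℕ := ∏ k ∈ Finset.range n, m k

/-- The black squares `ℬ_n` of level `n`. -/
def blacks (m : ℕ → ℕ) (A : ℕ → Set (ℕ × ℕ)) (n : ℕ) : Set (ℕ × ℕ) :=
  {p : ℕ × ℕ | p.1 < mProd m n ∧ p.2 < mProd m n} \ whites m A n

/-- A border square of the `m × m` grid. -/
def IsBorder (m : ℕ) (p : ℕ × ℕ) : Prop :=
  p.1 = 0 ∨ p.2 = 0 ∨ p.1 = m - 1 ∨ p.2 = m - 1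

/-- `L_n`, the union of the white squares of level `n`. -/
def levelSet (m : ℕ → ℕ) (A : ℕ → Set (ℕ × ℕ)) (n : ℕ) : Set (ℝ × ℝ) :=
  ⋃ p ∈ whites m A n, cell (mProd m n) p

/-- `L_∞ = ⋂_{n ≥ 1} L_n` (the term `n = 0` is the whole unit square). -/
def limitSet (m : ℕ → ℕ) (A : ℕ → Set (ℕ × ℕ)) : Set (ℝ × ℝ) :=
  ⋂ n, levelSet m A n

def unitSquare : Set (ℝ × ℝ) := Icc (0 : ℝ) 1 ×ˢ Icc (0 : ℝ) 1

/-- A path in a graph (with adjacency `Adj`, within the vertex set `A`)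
from `u` to `v`: a nonempty list of distinct, consecutively adjacent squares of `A`,
starting at `u` and ending at `v`. -/
def IsPathIn (Adj : ℕ × ℕ → ℕ × ℕ → Prop) (A : Set (ℕ × ℕ))
    (l : List (ℕ × ℕ)) (u v : ℕ × ℕ) : Prop :=
  l ≠ [] ∧ l.Nodup ∧ l.Chain' Adj ∧ (∀ p ∈ l, p ∈ A) ∧
    l.head? = some u ∧ l.getLast? = some v

/-- `s` is an arc between `a` and `b`: a homeomorphic image of `[0,1]`
with endpoints `a` and `b`. -/
def IsArc (s : Set (ℝ × ℝ)) (a b : ℝ × ℝ) : Prop :=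
  ∃ f : ℝ → ℝ × ℝ, ContinuousOn f (Icc 0 1) ∧ InjOn f (Icc 0 1) ∧
    f '' Icc 0 1 = s ∧ f 0 = a ∧ f 1 = b

/-- `e` is the exit point of `L_∞` of the given type: for every `n ≥ 1` it lies in the
exit square of that type of `𝒲_n`. -/
def IsExitPoint (m : ℕ → ℕ) (A : ℕ → Set (ℕ × ℕ)) (s : Side) (e : ℝ × ℝ) : Prop :=
  ∀ n, 1 ≤ n → ∃ p, IsExitSq (mProd m n) (whites m A n) s p ∧ e ∈ cell (mProd m n) p

/-- The (closed) edge of the grid square `p` of the `m × m` grid on the given side. -/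
def cellEdge (m : ℕ) (p : ℕ × ℕ) : Side → Set (ℝ × ℝ)
  | .top => Icc ((p.1 : ℝ) / (m : ℝ)) (((p.1 : ℝ) + 1) / (m : ℝ)) ×ˢ {((p.2 : ℝ) + 1) / (m : ℝ)}
  | .bottom => Icc ((p.1 : ℝ) / (m : ℝ)) (((p.1 : ℝ) + 1) / (m : ℝ)) ×ˢ {(p.2 : ℝ) / (m : ℝ)}
  | .left => {(p.1 : ℝ) / (m : ℝ)} ×ˢ Icc ((p.2 : ℝ) / (m : ℝ)) (((p.2 : ℝ) + 1) / (m : ℝ))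
  | .right => {((p.1 : ℝ) + 1) / (m : ℝ)} ×ˢ Icc ((p.2 : ℝ) / (m : ℝ)) (((p.2 : ℝ) + 1) / (m : ℝ))

/-- Directions in the grid. -/
inductive Dir | up | down | left | right
deriving DecidableEq

/-- `stepDir p q d`: the square `q` is the neighbour of `p` in direction `d`. -/
def stepDir (p q : ℕ × ℕ) : Dir → Prop
  | .up => q.1 = p.1 ∧ q.2 = p.2 + 1
  | .down => q.1 = p.1 ∧ p.2 = q.2 + 1
  | .left => q.2 = p.2 ∧ p.1 = q.1 + 1
  | .right => q.2 = p.2 ∧ q.1 = p.1 + 1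

/-- The outward direction through a given side. -/
def outDir : Side → Dir
  | .top => .up
  | .bottom => .down
  | .left => .left
  | .right => .right

def sideOfDir : Dir → Side
  | .up => .top
  | .down => .bottom
  | .left => .left
  | .right => .right

/-- The six types `A, B, C, D, E, F` of paths (and of squares within a path). -/
inductive PTy | A | B | C | D | E | F
deriving DecidableEq

instance : Fintype PTy where
  elems := {PTy.A, PTy.B, PTy.C, PTy.D, PTy.E, PTy.F}
  complete := by intro x; cases x <;> simp

/-- The exit at which the `x`-path starts: `A`: top→bottom, `B`: left→right,
`C`: top→right, `D`: right→bottom, `E`: bottom→left, `F`: left→top. -/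
def startSide : PTy → Side
  | .A => .top
  | .B => .left
  | .C => .top
  | .D => .right
  | .E => .bottom
  | .F => .left

/-- The exit at which the `x`-path ends. -/
def endSide : PTy → Side
  | .A => .bottom
  | .B => .right
  | .C => .right
  | .D => .bottom
  | .E => .left
  | .F => .top

/-- The two neighbour directions characterising a square of each type. -/
def ptyDirPair : PTy → Dir × Dir
  | .A => (.up, .down)
  | .B => (.left, .right)
  | .C => (.up, .right)
  | .D => (.right, .down)
  | .E => (.down, .left)
  | .F => (.left, .up)

def ptyDirs (τ : PTy) : Set Dir := {(ptyDirPair τ).1, (ptyDirPair τ).2}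

/-- The set of directions from the `i`-th square of the path `l` towards its neighbours
within the path, where the first and last squares (exit squares) are regarded as having
an additional neighbour outside the unit square, in directions `dstart`, `dend`
respectively. -/
def pathDirs (l : List (ℕ × ℕ)) (dstart dend : Dir) (i : ℕ) : Set Dir :=
  {d | (∃ p q, l[i]? = some p ∧ l[i - 1]? = some q ∧ 0 < i ∧ stepDir p q d)
    ∨ (∃ p q, l[i]? = some p ∧ l[i + 1]? = some q ∧ stepDir p q d)
    ∨ (i = 0 ∧ d = dstart)
    ∨ (i + 1 = l.length ∧ d = dend)}

/-- The number of `τ`-squares of the path `l` (with outward exit directions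
`dstart`, `dend`). -/
noncomputable def countTy (l : List (ℕ × ℕ)) (dstart dend : Dir) (τ : PTy) : ℕ :=
  {i | i < l.length ∧ pathDirs l dstart dend i = ptyDirs τ}.ncard

/-- `M(n) = M_1 ⋅ M_2 ⋅ ⋯ ⋅ M_n`. -/
def matProd (M : ℕ → Matrix PTy PTy ℕ) (n : ℕ) : Matrix PTy PTy ℕ :=
  ((List.range n).map M).prod

/-- A simple closed curve: a subspace homeomorphic to the circle. -/
def IsSimpleClosedCurve (s : Set (ℝ × ℝ)) : Prop :=
  Nonempty (↥s ≃ₜ AddCircle (1 : ℝ))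

/-- The number of `δ`-mesh squares meeting `E`. -/
noncomputable def meshCount (δ : ℝ) (E : Set (ℝ × ℝ)) : ℕ :=
  {q : ℤ × ℤ | (E ∩ (Icc ((q.1 : ℝ) * δ) (((q.1 : ℝ) + 1) * δ) ×ˢ
      Icc ((q.2 : ℝ) * δ) (((q.2 : ℝ) + 1) * δ))).Nonempty}.ncard

/-- The lower box-counting dimension of `E ⊆ ℝ²`. -/
noncomputable def lowerBoxDim (E : Set (ℝ × ℝ)) : ℝ :=
  Filter.liminf (fun δ : ℝ => Real.log (meshCount δ E) / (-Real.log δ)) (nhdsWithin 0 (Ioi 0))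

/-- The upper box-counting dimension of `E ⊆ ℝ²`. -/
noncomputable def upperBoxDim (E : Set (ℝ × ℝ)) : ℝ :=
  Filter.limsup (fun δ : ℝ => Real.log (meshCount δ E) / (-Real.log δ)) (nhdsWithin 0 (Ioi 0))

section Aux

variable {m : ℕ → ℕ} {A : ℕ → Set (ℕ × ℕ)}

lemma m_pos (hA : ∀ k, IsPattern (m k) (A k)) (k : ℕ) : 0 < m k := by
  obtain ⟨p, hp⟩ := (hA k).1
  exact (Nat.zero_le _).trans_lt ((hA k).2 p hp).1

lemma mProd_succ (m : ℕ → ℕ) (n : ℕ) : mProd m (n + 1) = mProd m n * m n :=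
  Finset.prod_range_succ _ _

lemma mProd_pos (hm : ∀ k, 0 < m k) (n : ℕ) : 0 < mProd m n :=
  Finset.prod_pos fun k _ => hm k

lemma whites_lt (hA : ∀ k, IsPattern (m k) (A k)) :
    ∀ n, ∀ p ∈ whites m A n, p.1 < mProd m n ∧ p.2 < mProd m n := by
  intro n
  induction n with
  | zero =>
    rintro p hp
    simp only [whites, Set.mem_singleton_iff] at hp
    subst hp
    simp [mProd]
  | succ n ih =>
    rintro q ⟨p, hp, r, hr, rfl⟩
    have h1 := ih p hp
    have h2 := (hA n).2 r hr
    rw [mProd_succ]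
    constructor
    · calc p.1 * m n + r.1 < (p.1 + 1) * m n := by
            rw [add_mul, one_mul]; omega
        _ ≤ mProd m n * m n := Nat.mul_le_mul_right _ h1.1
    · calc p.2 * m n + r.2 < (p.2 + 1) * m n := by
            rw [add_mul, one_mul]; omega
        _ ≤ mProd m n * m n := Nat.mul_le_mul_right _ h1.2

lemma dm1 {r b : ℕ} (a : ℕ) (hb : 0 < b) (hr : r < b) :
    (a * b + r) / b = a ∧ (a * b + r) % b = r := by
  rw [add_comm, Nat.add_mul_div_right _ _ hb, Nat.div_eq_of_lt hr, zero_add,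
    Nat.add_mul_mod_self_right, Nat.mod_eq_of_lt hr]
  exact ⟨rfl, rfl⟩

lemma pred_div_mod {a b : ℕ} (ha : 0 < a) (hb : 0 < b) :
    (a * b - 1) / b = a - 1 ∧ (a * b - 1) % b = b - 1 := by
  have h1 : a * b - 1 = (a - 1) * b + (b - 1) := by
    have h2 : (a - 1) * b + b = a * b := by
      have h3 : (a - 1 + 1) * b = a * b := by congr 1; omega
      rw [← h3]; ring
    omega
  rw [h1]
  exact dm1 _ hb (by omega)

lemma mem_whites_succ (hA : ∀ k, IsPattern (m k) (A k)) (n : ℕ) (q : ℕ × ℕ) :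
    q ∈ whites m A (n + 1) ↔
      (q.1 / m n, q.2 / m n) ∈ whites m A n ∧ (q.1 % m n, q.2 % m n) ∈ A n := by
  have hm0 : 0 < m n := m_pos hA n
  constructor
  · rintro ⟨p, hp, r, hr, rfl⟩
    have hb := (hA n).2 r hr
    have e1 := dm1 p.1 hm0 hb.1
    have e2 := dm1 p.2 hm0 hb.2
    constructor
    · simpa [e1.1, e2.1] using hp
    · simpa [e1.2, e2.2] using hr
  · rintro ⟨h1, h2⟩
    exact ⟨_, h1, _, h2,
      Prod.ext (Nat.div_add_mod' q.1 (m n)).symm (Nat.div_add_mod' q.2 (m n)).symm⟩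

lemma div_le_div_nat {M : ℕ} (hM : 0 < M) {a b : ℕ} (h : a ≤ b) :
    (a : ℝ) / M ≤ (b : ℝ) / M := by
  have hM' : (0:ℝ) < M := by exact_mod_cast hM
  rw [div_le_div_iff₀ hM' hM']
  exact mul_le_mul_of_nonneg_right (by exact_mod_cast h) hM'.le

lemma nat_le_of_div_le {M : ℕ} (hM : 0 < M) {a b : ℕ} (h : (a : ℝ) / M ≤ (b : ℝ) / M) :
    a ≤ b := by
  have hM' : (0:ℝ) < M := by exact_mod_cast hM
  rw [div_le_div_iff₀ hM' hM'] at h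
  have h2 : (a:ℝ) ≤ b := le_of_mul_le_mul_right h hM'
  exact_mod_cast h2

lemma cast_div_scale {a M b : ℕ} (hb : 0 < b) :
    (a : ℝ) / M = ((a * b : ℕ) : ℝ) / ((M * b : ℕ) : ℝ) := by
  have hb' : ((b:ℕ):ℝ) ≠ 0 := by
    have : (0:ℝ) < b := by exact_mod_cast hb
    exact this.ne'
  push_cast
  rw [mul_div_mul_right _ _ hb']

lemma top_col (hA : ∀ k, IsPattern (m k) (A k)) {n : ℕ} {x : ℝ}
    (hx : (x, (1:ℝ)) ∈ levelSet m A n) :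
    ∃ i, (i, mProd m n - 1) ∈ whites m A n ∧
      (i:ℝ) / mProd m n ≤ x ∧ x ≤ ((i:ℝ) + 1) / mProd m n := by
  have hM : 0 < mProd m n := mProd_pos (m_pos hA) n
  have hMR : (0:ℝ) < mProd m n := by exact_mod_cast hM
  rw [levelSet, Set.mem_iUnion₂] at hx
  obtain ⟨⟨i, j⟩, hp, hc⟩ := hx
  simp only [cell, Set.mem_prod, Set.mem_Icc] at hc
  have hj : mProd m n ≤ j + 1 := by
    have h1 : (1:ℝ) ≤ ((j:ℝ) + 1) / mProd m n := hc.2.2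
    rw [le_div_iff₀ hMR, one_mul] at h1
    exact_mod_cast h1
  have hjlt : j < mProd m n := (whites_lt hA n _ hp).2
  have hje : j = mProd m n - 1 := by omega
  subst hje
  exact ⟨i, hp, hc.1.1, hc.1.2⟩

lemma bot_col (hA : ∀ k, IsPattern (m k) (A k)) {n : ℕ} {x : ℝ}
    (hx : (x, (0:ℝ)) ∈ levelSet m A n) :
    ∃ i, (i, 0) ∈ whites m A n ∧
      (i:ℝ) / mProd m n ≤ x ∧ x ≤ ((i:ℝ) + 1) / mProd m n := by
  have hM : 0 < mProd m n := mProd_pos (m_pos hA) n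
  have hMR : (0:ℝ) < mProd m n := by exact_mod_cast hM
  rw [levelSet, Set.mem_iUnion₂] at hx
  obtain ⟨⟨i, j⟩, hp, hc⟩ := hx
  simp only [cell, Set.mem_prod, Set.mem_Icc] at hc
  have hj : j = 0 := by
    have h1 : (j:ℝ) / mProd m n ≤ 0 := hc.2.1
    rw [div_le_iff₀ hMR, zero_mul] at h1
    have : (j:ℝ) ≤ 0 := h1
    exact_mod_cast le_antisymm this (by positivity)
  subst hj
  exact ⟨i, hp, hc.1.1, hc.1.2⟩

end Aux
section Main

variable {m : ℕ → ℕ} {A : ℕ → Set (ℕ × ℕ)}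

lemma exit_interval
    (hA : ∀ k, IsPattern (m k) (A k))
    (hco1 : ∀ k, (0, 0) ∈ A k → (m k - 1, m k - 1) ∉ A k)
    (hco2 : ∀ k, (m k - 1, 0) ∈ A k → (0, m k - 1) ∉ A k)
    {x : ℝ} (hx1 : (x, (1:ℝ)) ∈ limitSet m A) (hx0 : (x, (0:ℝ)) ∈ limitSet m A)
    (n : ℕ) :
    ∃ i, ((i, mProd m n - 1) ∈ whites m A n ∧ (i, 0) ∈ whites m A n) ∧
      (i:ℝ) / mProd m n ≤ x ∧ x ≤ ((i:ℝ) + 1) / mProd m n := by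
  have hm0 : 0 < m n := m_pos hA n
  have hM : 0 < mProd m n := mProd_pos (m_pos hA) n
  have hMR : (0:ℝ) < mProd m n := by exact_mod_cast hM
  obtain ⟨i, hiW, hix1, hix2⟩ := top_col hA (Set.mem_iInter.mp hx1 n)
  obtain ⟨j, hjW, hjx1, hjx2⟩ := bot_col hA (Set.mem_iInter.mp hx0 n)
  by_cases hij : i = j
  · subst hij; exact ⟨i, ⟨hiW, hjW⟩, hix1, hix2⟩
  -- i ≠ j : x lies on a grid line x = t / mProd m n with t = max i j ≥ 1
  have hji : j ≤ i + 1 := by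
    have h : (j:ℝ) / mProd m n ≤ ((i + 1 : ℕ):ℝ) / mProd m n := by push_cast; linarith
    exact_mod_cast nat_le_of_div_le hM h
  have hij2 : i ≤ j + 1 := by
    have h : (i:ℝ) / mProd m n ≤ ((j + 1 : ℕ):ℝ) / mProd m n := by push_cast; linarith
    exact_mod_cast nat_le_of_div_le hM h
  set t := max i j with ht
  have ht1 : 1 ≤ t := by omega
  have hxt : x = (t:ℝ) / mProd m n := by
    have hmin : min i j + 1 = t := by omega
    have h1 : (t:ℝ) / mProd m n ≤ x := by
      rcases max_cases i j with ⟨he, -⟩ | ⟨he, -⟩ <;> rw [← ht] at he <;> rw [he]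
      · exact hix1
      · exact hjx1
    have h2 : x ≤ (t:ℝ) / mProd m n := by
      have hcast : (t:ℝ) = ((min i j : ℕ):ℝ) + 1 := by exact_mod_cast hmin.symm
      rw [hcast]
      rcases min_cases i j with ⟨he, -⟩ | ⟨he, -⟩ <;> rw [he]
      · exact hix2
      · exact hjx2
    linarith
  -- move to level n + 1
  have hM' : 0 < mProd m (n+1) := mProd_pos (m_pos hA) (n+1)
  obtain ⟨i', hi'W, hi'x1, hi'x2⟩ := top_col hA (Set.mem_iInter.mp hx1 (n+1))
  obtain ⟨j', hj'W, hj'x1, hj'x2⟩ := bot_col hA (Set.mem_iInter.mp hx0 (n+1))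
  obtain ⟨c, hc⟩ : ∃ c, c = t * m n := ⟨_, rfl⟩
  have hcpos : 1 ≤ c := by rw [hc]; exact Nat.mul_le_mul ht1 hm0
  have hxc : x = (c:ℝ) / ((mProd m (n+1) : ℕ):ℝ) := by
    rw [hxt, cast_div_scale hm0, ← mProd_succ, ← hc]
  have hi'le : i' ≤ c := by
    apply nat_le_of_div_le hM'
    rw [← hxc]; exact hi'x1
  have hi'ge : c ≤ i' + 1 := by
    have h : (c:ℝ) / mProd m (n+1) ≤ ((i' + 1 : ℕ):ℝ) / mProd m (n+1) := by
      push_cast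
      rw [← hxc]; exact hi'x2
    exact_mod_cast nat_le_of_div_le hM' h
  have hj'le : j' ≤ c := by
    apply nat_le_of_div_le hM'
    rw [← hxc]; exact hj'x1
  have hj'ge : c ≤ j' + 1 := by
    have h : (c:ℝ) / mProd m (n+1) ≤ ((j' + 1 : ℕ):ℝ) / mProd m (n+1) := by
      push_cast
      rw [← hxc]; exact hj'x2
    exact_mod_cast nat_le_of_div_le hM' h
  rw [mProd_succ] at hi'W
  have htop := (mem_whites_succ hA n _).mp hi'W
  have hbot := (mem_whites_succ hA n _).mp hj'W
  have hd := pred_div_mod hM hm0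
  by_cases hij' : i' = j'
  · -- project the exit pair one level down
    subst hij'
    simp only [hd.1, hd.2, Nat.zero_div, Nat.zero_mod] at htop hbot
    refine ⟨i' / m n, ⟨htop.1, hbot.1⟩, ?_, ?_⟩
    · calc ((i' / m n : ℕ):ℝ) / (mProd m n)
          = ((i' / m n * m n : ℕ):ℝ) / ((mProd m n * m n : ℕ):ℝ) := cast_div_scale hm0
        _ = ((i' / m n * m n : ℕ):ℝ) / ((mProd m (n+1) : ℕ):ℝ) := by rw [← mProd_succ]
        _ ≤ ((i' : ℕ):ℝ) / (mProd m (n+1)) := div_le_div_nat hM' (Nat.div_mul_le_self i' (m n))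
        _ ≤ x := hi'x1
    · have hle : i' + 1 ≤ (i' / m n + 1) * m n := by
        have h1 := Nat.div_add_mod' i' (m n)
        have h2 : i' % m n < m n := Nat.mod_lt _ hm0
        have h3 : (i' / m n + 1) * m n = i' / m n * m n + m n := by ring
        omega
      calc x ≤ ((i':ℝ) + 1) / (mProd m (n+1)) := hi'x2
        _ = ((i' + 1 : ℕ):ℝ) / ((mProd m (n+1) : ℕ):ℝ) := by norm_cast
        _ ≤ (((i' / m n + 1) * m n : ℕ):ℝ) / (mProd m (n+1)) := div_le_div_nat hM' hle
        _ = ((i' / m n + 1 : ℕ):ℝ) / ((mProd m n : ℕ):ℝ) := by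
            rw [mProd_succ]; exact (cast_div_scale hm0).symm
        _ = (((i' / m n : ℕ):ℝ) + 1) / (mProd m n) := by norm_cast
  · -- two different columns at level n+1 would give diagonally opposite corners
    exfalso
    have hcases : (i' = c - 1 ∧ j' = c) ∨ (i' = c ∧ j' = c - 1) := by
      clear hc
      omega
    have hcmod : c % m n = 0 := by rw [hc]; exact Nat.mul_mod_left t (m n)
    have hcpred : (c - 1) % m n = m n - 1 := by
      rw [hc]; exact (pred_div_mod ht1 hm0).2
    rcases hcases with ⟨hi'e, hj'e⟩ | ⟨hi'e, hj'e⟩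
    · have h1 : (m n - 1, m n - 1) ∈ A n := by
        have h := htop.2
        simp only [hd.2, hi'e, hcpred] at h
        exact h
      have h2 : (0, 0) ∈ A n := by
        have h := hbot.2
        simp only [hj'e, hcmod, Nat.zero_mod] at h
        exact h
      exact hco1 n h2 h1
    · have h1 : (0, m n - 1) ∈ A n := by
        have h := htop.2
        simp only [hd.2, hi'e, hcmod] at h
        exact h
      have h2 : (m n - 1, 0) ∈ A n := by
        have h := hbot.2
        simp only [hj'e, hcpred, Nat.zero_mod] at h
        exact h
      exact hco2 n h2 h1

end Main
section Master

variable {m : ℕ → ℕ} {A : ℕ → Set (ℕ × ℕ)}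

lemma vertical_master
    (hA : ∀ k, IsPattern (m k) (A k))
    (hco1 : ∀ k, (0, 0) ∈ A k → (m k - 1, m k - 1) ∉ A k)
    (hco2 : ∀ k, (m k - 1, 0) ∈ A k → (0, m k - 1) ∉ A k)
    {x : ℝ} (hx : x ∈ Set.Icc (0:ℝ) 1) :
    ((x, (1:ℝ)) ∈ limitSet m A ∧ (x, (0:ℝ)) ∈ limitSet m A) ↔
      (IsExitPoint m A Side.top (x, 1) ∧ IsExitPoint m A Side.bottom (x, 0)) := by
  constructor
  · rintro ⟨h1, h0⟩
    have key : ∀ n, ∃ i, ((i, mProd m n - 1) ∈ whites m A n ∧ (i, 0) ∈ whites m A n) ∧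
        (i:ℝ) / mProd m n ≤ x ∧ x ≤ ((i:ℝ) + 1) / mProd m n :=
      exit_interval hA hco1 hco2 h1 h0
    constructor
    · intro n _
      obtain ⟨i, ⟨hiT, hiB⟩, hq1, hq2⟩ := key n
      have hM : 0 < mProd m n := mProd_pos (m_pos hA) n
      have hMR : (0:ℝ) < mProd m n := by exact_mod_cast hM
      have hcast : ((mProd m n - 1 : ℕ):ℝ) = (mProd m n : ℝ) - 1 := by
        rw [Nat.cast_sub hM, Nat.cast_one]
      refine ⟨(i, mProd m n - 1), ⟨hiT, rfl, hiB⟩, ?_⟩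
      simp only [cell, Set.mem_prod, Set.mem_Icc]
      refine ⟨⟨hq1, hq2⟩, ?_, ?_⟩
      · rw [hcast, div_le_one hMR]; linarith
      · rw [hcast]
        have : ((mProd m n : ℝ) - 1 + 1) / mProd m n = 1 := by
          field_simp
          ring
        rw [this]
    · intro n _
      obtain ⟨i, ⟨hiT, hiB⟩, hq1, hq2⟩ := key n
      have hM : 0 < mProd m n := mProd_pos (m_pos hA) n
      have hMR : (0:ℝ) < mProd m n := by exact_mod_cast hM
      refine ⟨(i, 0), ⟨hiB, rfl, hiT⟩, ?_⟩
      simp only [cell, Set.mem_prod, Set.mem_Icc]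
      refine ⟨⟨hq1, hq2⟩, by simp, by positivity⟩
  · rintro ⟨ht, hb⟩
    have hzero : ∀ z : ℝ × ℝ, z.1 ∈ Set.Icc (0:ℝ) 1 → z.2 ∈ Set.Icc (0:ℝ) 1 →
        z ∈ levelSet m A 0 := by
      rintro ⟨a, b⟩ ha hb
      rw [levelSet, Set.mem_iUnion₂]
      refine ⟨(0, 0), rfl, ?_⟩
      simp only [cell, Set.mem_prod, Set.mem_Icc, mProd]
      norm_num
      exact ⟨⟨ha.1, ha.2⟩, hb.1, hb.2⟩
    constructor
    · rw [limitSet, Set.mem_iInter]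
      intro n
      match n with
      | 0 => exact hzero _ hx (by norm_num)
      | n + 1 =>
        obtain ⟨p, hpE, hpc⟩ := ht (n+1) (by omega)
        exact Set.mem_biUnion hpE.1 hpc
    · rw [limitSet, Set.mem_iInter]
      intro n
      match n with
      | 0 => exact hzero _ hx (by norm_num)
      | n + 1 =>
        obtain ⟨p, hpE, hpc⟩ := hb (n+1) (by omega)
        exact Set.mem_biUnion hpE.1 hpc

end Master
section Swap

variable {m : ℕ → ℕ} {A : ℕ → Set (ℕ × ℕ)}

lemma cell_swap (M : ℕ) (p : ℕ × ℕ) (z : ℝ × ℝ) :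
    z ∈ cell M p ↔ z.swap ∈ cell M p.swap := by
  simp only [cell, Set.mem_prod, Set.mem_Icc, Prod.swap]
  tauto

lemma whites_swap (n : ℕ) :
    whites m (fun k => Prod.swap ⁻¹' A k) n = Prod.swap ⁻¹' whites m A n := by
  induction n with
  | zero =>
    ext p
    simp only [whites, Set.mem_singleton_iff, Set.mem_preimage, Prod.ext_iff, Prod.swap]
    tauto
  | succ n ih =>
    ext q
    simp only [whites, subst, Set.mem_setOf_eq, Set.mem_preimage, ih]
    constructor
    · rintro ⟨p, hp, r, hr, rfl⟩
      exact ⟨p.swap, hp, r.swap, hr, by simp [Prod.swap, Prod.ext_iff]⟩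
    · rintro ⟨p, hp, r, hr, hq⟩
      refine ⟨p.swap, by simpa using hp, r.swap, by simpa using hr, ?_⟩
      have h2 := congrArg Prod.swap hq
      simpa [Prod.swap, Prod.ext_iff, and_comm] using h2

lemma levelSet_swap (n : ℕ) (z : ℝ × ℝ) :
    z ∈ levelSet m (fun k => Prod.swap ⁻¹' A k) n ↔ z.swap ∈ levelSet m A n := by
  rw [levelSet, levelSet, Set.mem_iUnion₂, Set.mem_iUnion₂]
  constructor
  · rintro ⟨p, hp, hz⟩
    rw [whites_swap] at hp
    exact ⟨p.swap, hp, (cell_swap _ _ _).mp hz⟩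
  · rintro ⟨p, hp, hz⟩
    refine ⟨p.swap, ?_, ?_⟩
    · rw [whites_swap]; simpa using hp
    · rw [cell_swap]; simpa using hz

lemma limitSet_swap (z : ℝ × ℝ) :
    z ∈ limitSet m (fun k => Prod.swap ⁻¹' A k) ↔ z.swap ∈ limitSet m A := by
  simp only [limitSet, Set.mem_iInter, levelSet_swap]

lemma exitSq_swap_bottom (M : ℕ) (W : Set (ℕ × ℕ)) (p : ℕ × ℕ) :
    IsExitSq M (Prod.swap ⁻¹' W) Side.bottom p ↔ IsExitSq M W Side.left p.swap := by
  simp only [IsExitSq, Set.mem_preimage, Prod.swap]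

lemma exitSq_swap_top (M : ℕ) (W : Set (ℕ × ℕ)) (p : ℕ × ℕ) :
    IsExitSq M (Prod.swap ⁻¹' W) Side.top p ↔ IsExitSq M W Side.right p.swap := by
  simp only [IsExitSq, Set.mem_preimage, Prod.swap]

lemma exitPoint_swap_bottom (e : ℝ × ℝ) :
    IsExitPoint m (fun k => Prod.swap ⁻¹' A k) Side.bottom e ↔
      IsExitPoint m A Side.left e.swap := by
  unfold IsExitPoint
  refine forall₂_congr fun n hn => ?_
  rw [whites_swap]
  constructor
  · rintro ⟨p, hsq, hc⟩
    exact ⟨p.swap, (exitSq_swap_bottom _ _ _).mp hsq, (cell_swap _ _ _).mp hc⟩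
  · rintro ⟨p, hsq, hc⟩
    refine ⟨p.swap, ?_, ?_⟩
    · rw [exitSq_swap_bottom]; simpa using hsq
    · rw [cell_swap]; simpa using hc

lemma exitPoint_swap_top (e : ℝ × ℝ) :
    IsExitPoint m (fun k => Prod.swap ⁻¹' A k) Side.top e ↔
      IsExitPoint m A Side.right e.swap := by
  unfold IsExitPoint
  refine forall₂_congr fun n hn => ?_
  rw [whites_swap]
  constructor
  · rintro ⟨p, hsq, hc⟩
    exact ⟨p.swap, (exitSq_swap_top _ _ _).mp hsq, (cell_swap _ _ _).mp hc⟩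
  · rintro ⟨p, hsq, hc⟩
    refine ⟨p.swap, ?_, ?_⟩
    · rw [exitSq_swap_top]; simpa using hsq
    · rw [cell_swap]; simpa using hc

end Swap
end Labyrinth
open Labyrinth in
/-- for `x ∈ [0,1]`, both `(x,1) ∈ L_∞` and `(x,0) ∈ L_∞` hold iff `(x,1)`
is the top exit and `(x,0)` the bottom exit of `L_∞`; analogously for `(0,y), (1,y)` and
the left and right exits. -/
theorem boundary_points_are_exits (m : ℕ → ℕ) (A : ℕ → Set (ℕ × ℕ))
    (hlab : ∀ k, IsLabyrinthPattern (m k) (A k)) :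
    (∀ x : ℝ, x ∈ Set.Icc (0 : ℝ) 1 →
      (((x, (1 : ℝ)) ∈ limitSet m A ∧ (x, (0 : ℝ)) ∈ limitSet m A) ↔
        (IsExitPoint m A Side.top (x, 1) ∧ IsExitPoint m A Side.bottom (x, 0)))) ∧
    (∀ y : ℝ, y ∈ Set.Icc (0 : ℝ) 1 →
      ((((0 : ℝ), y) ∈ limitSet m A ∧ ((1 : ℝ), y) ∈ limitSet m A) ↔
        (IsExitPoint m A Side.left (0, y) ∧ IsExitPoint m A Side.right (1, y)))) := by
  have hA : ∀ k, IsPattern (m k) (A k) := fun k => (hlab k).2.1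
  have hco1 : ∀ k, (0, 0) ∈ A k → (m k - 1, m k - 1) ∉ A k := fun k => (hlab k).2.2.2.2.2.1
  have hco2 : ∀ k, (m k - 1, 0) ∈ A k → (0, m k - 1) ∉ A k := fun k => (hlab k).2.2.2.2.2.2
  constructor
  · intro x hx
    exact vertical_master hA hco1 hco2 hx
  · intro y hy
    have hA' : ∀ k, IsPattern (m k) (Prod.swap ⁻¹' A k) := by
      intro k
      obtain ⟨⟨p, hp⟩, hb⟩ := hA k
      refine ⟨⟨p.swap, by simpa using hp⟩, ?_⟩
      rintro q hq
      exact ⟨(hb q.swap hq).2, (hb q.swap hq).1⟩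
    have hco1' : ∀ k, (0, 0) ∈ Prod.swap ⁻¹' A k →
        (m k - 1, m k - 1) ∉ Prod.swap ⁻¹' A k := by
      intro k h hcon
      exact hco1 k h hcon
    have hco2' : ∀ k, (m k - 1, 0) ∈ Prod.swap ⁻¹' A k →
        (0, m k - 1) ∉ Prod.swap ⁻¹' A k := by
      intro k h hcon
      exact hco2 k hcon h
    have h := vertical_master (A := fun k => Prod.swap ⁻¹' A k) hA' hco1' hco2' hy
    rw [limitSet_swap, limitSet_swap, exitPoint_swap_top, exitPoint_swap_bottom] at h
    simp only [Prod.swap_prod_mk] at h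
    constructor
    · rintro ⟨a, b⟩
      have hh := h.mp ⟨b, a⟩
      exact ⟨hh.2, hh.1⟩
    · rintro ⟨a, b⟩
      have hh := h.mpr ⟨b, a⟩
      exact ⟨hh.2, hh.1⟩
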